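/- arXiv:2405.11634 — 2 statements merged into one kernel-verified Lean document; each statement's English description precedes it below -/
import Mathlib

section
/- If the operator pencil P(λ) = λE − A, with E bounded and A closed and densely defined, has a right singular polynomial, then it has a right approximate polynomial sequence. -/
open Filter Topology

noncomputable section

variable {X Y : Type*}
  [NormedAddCommGroup X] [InnerProductSpace ℂ X] [CompleteSpace X]
  [NormedAddCommGroup Y] [InnerProductSpace ℂ Y] [CompleteSpace Y]

/-- Evaluation of the `X`-valued polynomial `p(λ) = ∑_{j=0}^k λ^j a_j` at `lam`. -/
def polyEval {Z : Type*} [AddCommGroup Z] [Module ℂ Z] (a : ℕ → Z) (k : ℕ) (lam : ℂ) : Z :=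
  ∑ j ∈ Finset.range (k + 1), lam ^ j • a j

/-- Evaluation of the reversal `rev p(λ) = ∑_{j=0}^k λ^j a_{k-j}` at `lam`. -/
def revEval {Z : Type*} [AddCommGroup Z] [Module ℂ Z] (a : ℕ → Z) (k : ℕ) (lam : ℂ) : Z :=
  ∑ j ∈ Finset.range (k + 1), lam ^ j • a (k - j)

/-- Application of a partially defined operator, extended by `0` outside its domain. -/
noncomputable def pap {W Z : Type*} [NormedAddCommGroup W] [InnerProductSpace ℂ W]
    [NormedAddCommGroup Z] [InnerProductSpace ℂ Z] (A : W →ₗ.[ℂ] Z) (v : W) : Z :=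
  haveI := Classical.dec (v ∈ A.domain)
  if h : v ∈ A.domain then A ⟨v, h⟩ else 0

/-- The pencil `λE - A` (with `E` bounded) has a right singular polynomial: a nonzero
`X`-valued polynomial `p` with `p(λ0) ∈ D(A)` and `(λ0 E - A) p(λ0) = 0` for all `λ0`. -/
def HasRightSingularPoly (E : X →L[ℂ] Y) (A : X →ₗ.[ℂ] Y) : Prop :=
  ∃ (k : ℕ) (a : ℕ → X), (∃ j ≤ k, a j ≠ 0) ∧
    ∀ lam : ℂ, polyEval a k lam ∈ A.domain ∧
      lam • E (polyEval a k lam) - pap A (polyEval a k lam) = 0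

/-- The polynomials `p_n(λ) = ∑_{j=0}^{k n} λ^j (a n j)` form a right approximate
polynomial sequence for the pencil `λE - A` with `E` bounded. -/
def IsRAPS (E : X →L[ℂ] Y) (A : X →ₗ.[ℂ] Y) (k : ℕ → ℕ) (a : ℕ → ℕ → X) : Prop :=
  (∀ (n : ℕ) (lam : ℂ),
      polyEval (a n) (k n) lam ∈ A.domain ∧ revEval (a n) (k n) lam ∈ A.domain) ∧
  ∀ lam : ℂ,
    (∀ n, polyEval (a n) (k n) lam ≠ 0) ∧
    (∀ n, revEval (a n) (k n) lam ≠ 0) ∧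
    ¬ Tendsto (fun n => ‖polyEval (a n) (k n) lam‖) atTop (𝓝 (0 : ℝ)) ∧
    ¬ Tendsto (fun n => ‖revEval (a n) (k n) lam‖) atTop (𝓝 (0 : ℝ)) ∧
    Tendsto (fun n => lam • E (polyEval (a n) (k n) lam) -
      pap A (polyEval (a n) (k n) lam)) atTop (𝓝 (0 : Y)) ∧
    Tendsto (fun n => lam • pap A (revEval (a n) (k n) lam) -
      E (revEval (a n) (k n) lam)) atTop (𝓝 (0 : Y))

section Aux

open Finset

variable {W Z : Type*} [NormedAddCommGroup W] [InnerProductSpace ℂ W]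
  [NormedAddCommGroup Z] [InnerProductSpace ℂ Z]

lemma pap_eq (A : W →ₗ.[ℂ] Z) {x : W} (h : x ∈ A.domain) : pap A x = A ⟨x, h⟩ := by
  unfold pap
  rw [dif_pos h]

lemma pap_zero (A : W →ₗ.[ℂ] Z) : pap A 0 = 0 := by
  rw [pap_eq A (Submodule.zero_mem _)]
  exact A.map_zero

lemma pap_smul (A : W →ₗ.[ℂ] Z) (c : ℂ) {x : W} (h : x ∈ A.domain) :
    pap A (c • x) = c • pap A x := by
  rw [pap_eq A (Submodule.smul_mem _ c h), pap_eq A h]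
  have : (⟨c • x, Submodule.smul_mem _ c h⟩ : A.domain) = c • (⟨x, h⟩ : A.domain) := rfl
  rw [this, A.map_smul]

lemma pap_add (A : W →ₗ.[ℂ] Z) {x y : W} (hx : x ∈ A.domain) (hy : y ∈ A.domain) :
    pap A (x + y) = pap A x + pap A y := by
  rw [pap_eq A (Submodule.add_mem _ hx hy), pap_eq A hx, pap_eq A hy]
  have : (⟨x + y, Submodule.add_mem _ hx hy⟩ : A.domain)
      = (⟨x, hx⟩ : A.domain) + (⟨y, hy⟩ : A.domain) := rfl
  rw [this, A.map_add]

lemma pap_sum (A : W →ₗ.[ℂ] Z) {ι : Type*} (t : Finset ι) (f : ι → W)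
    (hf : ∀ i ∈ t, f i ∈ A.domain) :
    pap A (∑ i ∈ t, f i) = ∑ i ∈ t, pap A (f i) := by
  classical
  induction t using Finset.induction with
  | empty => simpa using pap_zero A
  | insert _ _ hnot ih =>
    rename_i s i
    rw [Finset.sum_insert hnot, Finset.sum_insert hnot,
      pap_add A (hf _ (Finset.mem_insert_self _ _))
        (Submodule.sum_mem _ fun j hj => hf _ (Finset.mem_insert_of_mem hj)),
      ih fun j hj => hf _ (Finset.mem_insert_of_mem hj)]

lemma cont_polyEval (a : ℕ → W) (k : ℕ) : Continuous fun l : ℂ => polyEval a k l := by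
  unfold polyEval
  exact continuous_finset_sum _ fun j _ => (continuous_pow j).smul continuous_const

lemma cont_revEval (a : ℕ → W) (k : ℕ) : Continuous fun l : ℂ => revEval a k l := by
  unfold revEval
  exact continuous_finset_sum _ fun j _ => (continuous_pow j).smul continuous_const

lemma polyEval_succ (a : ℕ → W) (k : ℕ) (l : ℂ) :
    polyEval a (k + 1) l = polyEval a k l + l ^ (k + 1) • a (k + 1) :=
  Finset.sum_range_succ _ _

lemma polyEval_zero_deg (a : ℕ → W) (l : ℂ) : polyEval a 0 l = a 0 := by
  simp [polyEval]

lemma eval_at_zero (c : ℕ → W) (k : ℕ) :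
    ∑ j ∈ range (k + 1), (0 : ℂ) ^ j • c j = c 0 := by
  rw [Finset.sum_eq_single 0]
  · simp
  · intro j _ hj
    simp [zero_pow hj]
  · simp

def bcoef (a : ℕ → W) (k : ℕ) (l0 : ℂ) (m : ℕ) : W :=
  ∑ i ∈ range (k - m), l0 ^ i • a (m + 1 + i)

lemma bcoef_top (a : ℕ → W) (k : ℕ) (l0 : ℂ) : bcoef a (k + 1) l0 k = a (k + 1) := by
  rw [bcoef, show k + 1 - k = 1 from by omega]
  simp

lemma bcoef_self (a : ℕ → W) (k : ℕ) (l0 : ℂ) : bcoef a k l0 k = 0 := by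
  rw [bcoef]
  simp

lemma bcoef_succ (a : ℕ → W) (k : ℕ) (l0 : ℂ) {m : ℕ} (hm : m ≤ k) :
    bcoef a (k + 1) l0 m = bcoef a k l0 m + l0 ^ (k - m) • a (k + 1) := by
  rw [bcoef, bcoef, show k + 1 - m = (k - m) + 1 from by omega, Finset.sum_range_succ,
    show m + 1 + (k - m) = k + 1 from by omega]

lemma bcoef_rec (a : ℕ → W) (k : ℕ) (l0 : ℂ) {m : ℕ} (hm : m < k) :
    bcoef a k l0 m = a (m + 1) + l0 • bcoef a k l0 (m + 1) := by
  rw [bcoef, bcoef, show k - m = (k - (m + 1)) + 1 from by omega, Finset.sum_range_succ',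
    Finset.smul_sum]
  simp only [pow_zero, one_smul, add_zero]
  rw [add_comm]
  congr 1
  refine Finset.sum_congr rfl fun i _ => ?_
  rw [smul_smul, ← pow_succ', show m + 1 + (i + 1) = m + 1 + 1 + i from by omega]

lemma div_id (a : ℕ → W) (k : ℕ) (l0 l : ℂ) :
    polyEval a k l - polyEval a k l0 = (l - l0) • ∑ m ∈ range k, l ^ m • bcoef a k l0 m := by
  induction k with
  | zero => simp [polyEval_zero_deg]
  | succ k ih =>
    rw [polyEval_succ, polyEval_succ]
    have hgeom : l ^ (k + 1) - l0 ^ (k + 1)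
        = (∑ i ∈ range (k + 1), l ^ i * l0 ^ (k - i)) * (l - l0) := by
      have := geom_sum₂_mul l l0 (k + 1)
      simp only [Nat.add_sub_cancel] at this
      exact this.symm
    have step1 : polyEval a (k + 1) l - polyEval a (k + 1) l0
        = (polyEval a k l - polyEval a k l0) + (l ^ (k + 1) - l0 ^ (k + 1)) • a (k + 1) := by
      rw [polyEval_succ, polyEval_succ, sub_smul]
      abel
    rw [← polyEval_succ, ← polyEval_succ, step1, ih, hgeom]
    have hsplit : ∑ m ∈ range (k + 1), l ^ m • bcoef a (k + 1) l0 m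
        = (∑ m ∈ range k, l ^ m • bcoef a k l0 m)
          + (∑ m ∈ range (k + 1), l ^ m * l0 ^ (k - m)) • a (k + 1) := by
      have : ∀ m ∈ range (k + 1), l ^ m • bcoef a (k + 1) l0 m
          = l ^ m • bcoef a k l0 m + (l ^ m * l0 ^ (k - m)) • a (k + 1) := by
        intro m hm
        rw [bcoef_succ a k l0 (Nat.lt_succ_iff.mp (Finset.mem_range.mp hm)), smul_add,
          smul_smul]
      rw [Finset.sum_congr rfl this, Finset.sum_add_distrib, Finset.sum_range_succ,
        bcoef_self, smul_zero, add_zero, ← Finset.sum_smul]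
    rw [hsplit, smul_add, smul_smul, mul_comm (l - l0)]

lemma coeff_mem (k : ℕ) : ∀ (a : ℕ → W) (M : Submodule ℂ W) (s : Set ℂ), s.Infinite →
    (∀ l ∈ s, polyEval a k l ∈ M) → ∀ j ≤ k, a j ∈ M := by
  induction k with
  | zero =>
    intro a M s hs h j hj
    obtain ⟨l0, hl0⟩ := hs.nonempty
    have := h l0 hl0
    rw [polyEval_zero_deg] at this
    rwa [Nat.le_zero.mp hj]
  | succ k ih =>
    intro a M s hs h
    obtain ⟨l0, hl0⟩ := hs.nonempty
    set b := bcoef a (k + 1) l0 with hbdef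
    have hb : ∀ j ≤ k, b j ∈ M := by
      refine ih b M (s \ {l0}) (hs.diff (Set.finite_singleton l0)) ?_
      intro l hl
      have hne : l - l0 ≠ 0 := sub_ne_zero.mpr hl.2
      have hds : polyEval a (k + 1) l - polyEval a (k + 1) l0 = (l - l0) • polyEval b k l :=
        div_id a (k + 1) l0 l
      have : polyEval b k l
          = (l - l0)⁻¹ • (polyEval a (k + 1) l - polyEval a (k + 1) l0) := by
        rw [hds, smul_smul, inv_mul_cancel₀ hne, one_smul]
      rw [this]
      exact Submodule.smul_mem _ _ (sub_mem (h l hl.1) (h l0 hl0))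
    have hb' : ∀ j ≤ k + 1, b j ∈ M := by
      intro j hj
      rcases Nat.lt_succ_iff_lt_or_eq.mp (Nat.lt_succ_of_le hj) with h1 | h1
      · exact hb j (Nat.lt_succ_iff.mp h1)
      · rw [h1, hbdef, bcoef_self]
        exact Submodule.zero_mem _
    have haj : ∀ m ≤ k, a (m + 1) ∈ M := by
      intro m hm
      have : a (m + 1) = b m - l0 • b (m + 1) := by
        rw [hbdef, bcoef_rec a (k + 1) l0 (Nat.lt_succ_of_le hm)]
        abel
      rw [this]
      exact sub_mem (hb' m (le_trans hm (Nat.le_succ k)))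
        (Submodule.smul_mem _ _ (hb' (m + 1) (Nat.succ_le_succ hm)))
    have ha0 : a 0 ∈ M := by
      have h0 : polyEval a (k + 1) l0
          = (∑ j ∈ range (k + 1), l0 ^ (j + 1) • a (j + 1)) + a 0 := by
        rw [polyEval, Finset.sum_range_succ']
        simp
      have : a 0 = polyEval a (k + 1) l0 - ∑ j ∈ range (k + 1), l0 ^ (j + 1) • a (j + 1) := by
        rw [h0]; abel
      rw [this]
      exact sub_mem (h l0 hl0) (Submodule.sum_mem _ fun j hj =>
        Submodule.smul_mem _ _ (haj j (Nat.lt_succ_iff.mp (Finset.mem_range.mp hj))))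
    intro j hj
    cases j with
    | zero => exact ha0
    | succ m => exact haj m (Nat.lt_succ_iff.mp hj)

lemma rev_eq (a : ℕ → W) (k : ℕ) {l : ℂ} (hl : l ≠ 0) :
    revEval a k l = l ^ k • polyEval a k l⁻¹ := by
  have h1 : revEval a k l = ∑ j ∈ range (k + 1), l ^ (k - (k - j)) • a (k - j) := by
    rw [revEval]
    refine Finset.sum_congr rfl fun j hj => ?_
    rw [Nat.sub_sub_self (Nat.lt_succ_iff.mp (Finset.mem_range.mp hj))]
  have h2 : ∑ j ∈ range (k + 1), l ^ (k - (k - j)) • a (k - j)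
      = ∑ j ∈ range (k + 1), l ^ (k - j) • a j := by
    have := Finset.sum_range_reflect (fun j => l ^ (k - j) • a j) (k + 1)
    simp only [Nat.add_sub_cancel] at this
    exact this
  rw [h1, h2, polyEval, Finset.smul_sum]
  refine Finset.sum_congr rfl fun j hj => ?_
  rw [smul_smul, inv_pow, ← pow_sub₀ l hl (Nat.lt_succ_iff.mp (Finset.mem_range.mp hj))]

end Aux

section MainAux

open Finset

variable {W Z : Type*} [NormedAddCommGroup W] [InnerProductSpace ℂ W]
  [NormedAddCommGroup Z] [InnerProductSpace ℂ Z]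

lemma polyEval_def' (a : ℕ → W) (k : ℕ) (l : ℂ) :
    polyEval a k l = ∑ j ∈ range (k + 1), l ^ j • a j := rfl

lemma revEval_def' (a : ℕ → W) (k : ℕ) (l : ℂ) :
    revEval a k l = ∑ j ∈ range (k + 1), l ^ j • a (k - j) := rfl

lemma revEval_at_zero (a : ℕ → W) (k : ℕ) : revEval a k 0 = a k := by
  rw [revEval_def', eval_at_zero (fun j => a (k - j)) k, Nat.sub_zero]

end MainAux

/-- If the pencil `λE - A`, with `E` bounded and `A` closed and densely defined, has a
right singular polynomial, then it has a right approximate polynomial sequence. -/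
theorem stmt_8 (E : X →L[ℂ] Y) (A : X →ₗ.[ℂ] Y)
    (hdense : Dense (A.domain : Set X)) (hclosed : IsClosed (A.graph : Set (X × Y)))
    (h : HasRightSingularPoly E A) :
    ∃ (k : ℕ → ℕ) (a : ℕ → ℕ → X), IsRAPS E A k a := by
  classical
  obtain ⟨k0, a0, ⟨j0, hj0, hj0ne⟩, hp0⟩ := h
  -- strip trailing zeros
  have hmspec : a0 (Nat.findGreatest (fun j => a0 j ≠ 0) k0) ≠ 0 :=
    Nat.findGreatest_spec (P := fun j => a0 j ≠ 0) hj0 hj0ne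
  have hmle : Nat.findGreatest (fun j => a0 j ≠ 0) k0 ≤ k0 := Nat.findGreatest_le k0
  have heval : ∀ lam : ℂ,
      polyEval a0 k0 lam = polyEval a0 (Nat.findGreatest (fun j => a0 j ≠ 0) k0) lam := by
    intro lam
    rw [polyEval_def', polyEval_def']
    refine (Finset.sum_subset ?_ ?_).symm
    · intro x hx
      rw [Finset.mem_range] at hx ⊢
      omega
    · intro j hj hnj
      rw [Finset.mem_range] at hj hnj
      have h1 : Nat.findGreatest (fun j => a0 j ≠ 0) k0 < j := by omega
      have h2 : j ≤ k0 := by omega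
      have := Nat.findGreatest_is_greatest h1 h2
      rw [not_not.mp this, smul_zero]
  have hex : ∃ k : ℕ, ∃ a : ℕ → X, a k ≠ 0 ∧ ∀ lam : ℂ,
      polyEval a k lam ∈ A.domain ∧
      lam • E (polyEval a k lam) - pap A (polyEval a k lam) = 0 :=
    ⟨_, a0, hmspec, fun lam => by rw [← heval]; exact hp0 lam⟩
  obtain ⟨k, hkspec, hkmin⟩ :
      ∃ k : ℕ, (∃ a : ℕ → X, a k ≠ 0 ∧ ∀ lam : ℂ,
        polyEval a k lam ∈ A.domain ∧
        lam • E (polyEval a k lam) - pap A (polyEval a k lam) = 0) ∧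
      ∀ m < k, ¬(∃ a : ℕ → X, a m ≠ 0 ∧ ∀ lam : ℂ,
        polyEval a m lam ∈ A.domain ∧
        lam • E (polyEval a m lam) - pap A (polyEval a m lam) = 0) :=
    ⟨Nat.find hex, Nat.find_spec hex, fun m hm => Nat.find_min hex hm⟩
  obtain ⟨a, hak, hsing⟩ := hkspec
  have hadom : ∀ j ≤ k, a j ∈ A.domain :=
    coeff_mem k a A.domain Set.univ Set.infinite_univ (fun l _ => (hsing l).1)
  -- the polynomial has no roots (by minimality of its degree)
  have noroot : ∀ l : ℂ, polyEval a k l ≠ 0 := by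
    intro l0 hroot
    rcases Nat.eq_zero_or_pos k with hk0 | hkpos
    · subst hk0
      rw [polyEval_zero_deg] at hroot
      exact hak hroot
    · obtain ⟨k', rfl⟩ := Nat.exists_eq_succ_of_ne_zero (Nat.pos_iff_ne_zero.mp hkpos)
      have hplq : ∀ l : ℂ,
          polyEval a (k' + 1) l = (l - l0) • polyEval (bcoef a (k' + 1) l0) k' l := by
        intro l
        have hds := div_id a (k' + 1) l0 l
        rw [hroot, sub_zero] at hds
        rw [hds, polyEval_def']
      have hbdom : ∀ j ≤ k', bcoef a (k' + 1) l0 j ∈ A.domain := by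
        refine coeff_mem k' _ A.domain {l0}ᶜ ((Set.finite_singleton l0).infinite_compl) ?_
        intro l hl
        have hl' : l ≠ l0 := Set.mem_compl_singleton_iff.mp hl
        have : polyEval (bcoef a (k' + 1) l0) k' l
            = (l - l0)⁻¹ • polyEval a (k' + 1) l := by
          rw [hplq l, smul_smul, inv_mul_cancel₀ (sub_ne_zero.mpr hl'), one_smul]
        rw [this]
        exact Submodule.smul_mem _ _ (hsing l).1
      have hqdom : ∀ l : ℂ, polyEval (bcoef a (k' + 1) l0) k' l ∈ A.domain := by
        intro l
        rw [polyEval_def']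
        exact Submodule.sum_mem _ fun j hj => Submodule.smul_mem _ _
          (hbdom j (Nat.lt_succ_iff.mp (Finset.mem_range.mp hj)))
      have hpap : ∀ l : ℂ, pap A (polyEval (bcoef a (k' + 1) l0) k' l)
          = ∑ j ∈ Finset.range (k' + 1), l ^ j • pap A (bcoef a (k' + 1) l0 j) := by
        intro l
        rw [polyEval_def', pap_sum A _ _ (fun j hj => Submodule.smul_mem _ _
          (hbdom j (Nat.lt_succ_iff.mp (Finset.mem_range.mp hj))))]
        exact Finset.sum_congr rfl fun j hj =>
          pap_smul A _ (hbdom j (Nat.lt_succ_iff.mp (Finset.mem_range.mp hj)))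
      have hzero : ∀ l : ℂ, l ≠ l0 →
          l • E (polyEval (bcoef a (k' + 1) l0) k' l)
            - pap A (polyEval (bcoef a (k' + 1) l0) k' l) = 0 := by
        intro l hl
        have h1 : (l - l0) • (l • E (polyEval (bcoef a (k' + 1) l0) k' l)
            - pap A (polyEval (bcoef a (k' + 1) l0) k' l)) = 0 := by
          rw [smul_sub, smul_comm (l - l0) l,
            ← map_smul E (l - l0) (polyEval (bcoef a (k' + 1) l0) k' l),
            ← pap_smul A (l - l0) (hqdom l), ← hplq l]
          exact (hsing l).2
        exact (smul_eq_zero.mp h1).resolve_left (sub_ne_zero.mpr hl)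
      have hcont : Continuous fun l : ℂ =>
          l • E (polyEval (bcoef a (k' + 1) l0) k' l)
            - ∑ j ∈ Finset.range (k' + 1), l ^ j • pap A (bcoef a (k' + 1) l0 j) := by
        refine Continuous.sub ?_ ?_
        · exact continuous_id.smul (E.continuous.comp (cont_polyEval _ k'))
        · exact continuous_finset_sum _ fun j _ => (continuous_pow j).smul continuous_const
      have hfun : (fun l : ℂ =>
          l • E (polyEval (bcoef a (k' + 1) l0) k' l)
            - ∑ j ∈ Finset.range (k' + 1), l ^ j • pap A (bcoef a (k' + 1) l0 j))
          = fun _ => (0 : Y) := by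
        refine Continuous.ext_on (dense_compl_singleton l0) hcont continuous_const ?_
        intro l hl
        show l • E (polyEval (bcoef a (k' + 1) l0) k' l)
            - ∑ j ∈ Finset.range (k' + 1), l ^ j • pap A (bcoef a (k' + 1) l0 j) = 0
        rw [← hpap l]
        exact hzero l (Set.mem_compl_singleton_iff.mp hl)
      have hF0 : ∀ l : ℂ, l • E (polyEval (bcoef a (k' + 1) l0) k' l)
          - pap A (polyEval (bcoef a (k' + 1) l0) k' l) = 0 := by
        intro l
        rw [hpap l]
        exact congrFun hfun l
      exact hkmin k' (Nat.lt_succ_self k')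
        ⟨bcoef a (k' + 1) l0, by rw [bcoef_top]; exact hak,
          fun lam => ⟨hqdom lam, hF0 lam⟩⟩
  -- domain facts for the reversal
  have hrevdom : ∀ l : ℂ, revEval a k l ∈ A.domain := by
    intro l
    rw [revEval_def']
    exact Submodule.sum_mem _ fun j hj => Submodule.smul_mem _ _ (hadom (k - j) (Nat.sub_le k j))
  have hpaprev : ∀ l : ℂ, pap A (revEval a k l)
      = ∑ j ∈ Finset.range (k + 1), l ^ j • pap A (a (k - j)) := by
    intro l
    rw [revEval_def', pap_sum A _ _ (fun j hj => Submodule.smul_mem _ _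
      (hadom (k - j) (Nat.sub_le k j)))]
    exact Finset.sum_congr rfl fun j hj => pap_smul A _ (hadom (k - j) (Nat.sub_le k j))
  -- the reversed pencil annihilates the reversal
  have hGzero : ∀ l : ℂ, l ≠ 0 → l • pap A (revEval a k l) - E (revEval a k l) = 0 := by
    intro l hl
    rw [rev_eq a k hl, pap_smul A _ (hsing l⁻¹).1, map_smul]
    have hpencil := (hsing l⁻¹).2
    have hAp : pap A (polyEval a k l⁻¹) = l⁻¹ • E (polyEval a k l⁻¹) := by
      rw [sub_eq_zero] at hpencil
      exact hpencil.symm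
    rw [hAp, smul_smul, smul_smul]
    rw [show l * l ^ k * l⁻¹ = l ^ k from by field_simp]
    exact sub_self _
  have hGcont : Continuous fun l : ℂ =>
      l • (∑ j ∈ Finset.range (k + 1), l ^ j • pap A (a (k - j))) - E (revEval a k l) := by
    refine Continuous.sub ?_ (E.continuous.comp (cont_revEval a k))
    exact continuous_id.smul
      (continuous_finset_sum _ fun j _ => (continuous_pow j).smul continuous_const)
  have hGfun : (fun l : ℂ =>
      l • (∑ j ∈ Finset.range (k + 1), l ^ j • pap A (a (k - j))) - E (revEval a k l))
      = fun _ => (0 : Y) := by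
    refine Continuous.ext_on (dense_compl_singleton 0) hGcont continuous_const ?_
    intro l hl
    show l • (∑ j ∈ Finset.range (k + 1), l ^ j • pap A (a (k - j))) - E (revEval a k l) = 0
    rw [← hpaprev l]
    exact hGzero l (Set.mem_compl_singleton_iff.mp hl)
  have hG : ∀ l : ℂ, l • pap A (revEval a k l) - E (revEval a k l) = 0 := by
    intro l
    rw [hpaprev l]
    exact congrFun hGfun l
  have hrevne : ∀ l : ℂ, revEval a k l ≠ 0 := by
    intro l
    rcases eq_or_ne l 0 with rfl | hl
    · rw [revEval_at_zero]
      exact hak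
    · rw [rev_eq a k hl]
      exact smul_ne_zero (pow_ne_zero k hl) (noroot l⁻¹)
  refine ⟨fun _ => k, fun _ => a, fun n lam => ⟨(hsing lam).1, hrevdom lam⟩, ?_⟩
  intro lam
  refine ⟨fun n => noroot lam, fun n => hrevne lam, ?_, ?_, ?_, ?_⟩
  · intro hT
    have := tendsto_nhds_unique hT tendsto_const_nhds
    exact noroot lam (norm_eq_zero.mp this.symm)
  · intro hT
    have := tendsto_nhds_unique hT tendsto_const_nhds
    exact hrevne lam (norm_eq_zero.mp this.symm)
  · rw [show (fun n : ℕ => lam • E (polyEval a k lam) - pap A (polyEval a k lam))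
      = fun _ => (0 : Y) from funext fun _ => (hsing lam).2]
    exact tendsto_const_nhds
  · rw [show (fun n : ℕ => lam • pap A (revEval a k lam) - E (revEval a k lam))
      = fun _ => (0 : Y) from funext fun _ => hG lam]
    exact tendsto_const_nhds
end
end

section
/- If the operator pencil P(λ) = λE − A has a right approximate polynomial sequence, then every λ0 ∈ ℂ is an approximate singularity of P, and additionally ∞ is an approximate singularity, i.e., there exist unit vectors y_n ∈ D(A) with E y_n → 0 as n → ∞. -/
open Filter Topology

noncomputable section

variable {X Y : Type*}
  [NormedAddCommGroup X] [InnerProductSpace ℂ X] [CompleteSpace X]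
  [NormedAddCommGroup Y] [InnerProductSpace ℂ Y] [CompleteSpace Y]

/-- `lam` is an approximate singularity of the pencil `P(λ) = λE - A`:
there are unit vectors `xₙ ∈ D(A)` with `(λE - A)xₙ → 0`. -/
def IsApproxSingularity (E : X →L[ℂ] Y) (A : X →ₗ.[ℂ] Y) (lam : ℂ) : Prop :=
  ∃ x : ℕ → A.domain, (∀ n, ‖(x n : X)‖ = 1) ∧
    Tendsto (fun n => lam • E ((x n : X)) - A (x n)) atTop (𝓝 (0 : Y))

omit [CompleteSpace X] [CompleteSpace Y] in
lemma pap_mem' (A : X →ₗ.[ℂ] Y) (v : X) (hv : v ∈ A.domain) : pap A v = A ⟨v, hv⟩ :=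
  dif_pos hv

omit [CompleteSpace X] [CompleteSpace Y] in
lemma pap_smul' (A : X →ₗ.[ℂ] Y) (c : ℂ) (v : X) (hv : v ∈ A.domain) :
    pap A (c • v) = c • pap A v := by
  rw [pap_mem' A v hv, pap_mem' A (c • v) (A.domain.smul_mem c hv)]
  have : (⟨c • v, A.domain.smul_mem c hv⟩ : A.domain) = c • (⟨v, hv⟩ : A.domain) := rfl
  rw [this, A.map_smul]

omit [CompleteSpace X] [CompleteSpace Y] in
lemma key_normalize (A : X →ₗ.[ℂ] Y) (F : X → Y)
    (hF : ∀ (c : ℂ) (v : X), v ∈ A.domain → F (c • v) = c • F v)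
    (g : ℕ → X) (hg : ∀ n, g n ∈ A.domain)
    (hnt : ¬ Tendsto (fun n => ‖g n‖) atTop (𝓝 (0 : ℝ)))
    (hten : Tendsto (fun n => F (g n)) atTop (𝓝 (0 : Y))) :
    ∃ x : ℕ → A.domain, (∀ n, ‖(x n : X)‖ = 1) ∧
      Tendsto (fun n => F (x n : X)) atTop (𝓝 (0 : Y)) := by
  rw [Metric.tendsto_atTop] at hnt
  push_neg at hnt
  obtain ⟨ε, hε, hfr⟩ := hnt
  have hfreq : ∃ᶠ n in atTop, ε ≤ ‖g n‖ := by
    rw [frequently_atTop]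
    intro N
    obtain ⟨n, hn, hd⟩ := hfr N
    refine ⟨n, hn, ?_⟩
    rwa [Real.dist_eq, sub_zero, abs_of_nonneg (norm_nonneg _)] at hd
  obtain ⟨φ, hφ, hφε⟩ := Filter.extraction_of_frequently_atTop hfreq
  have hpos : ∀ n, 0 < ‖g (φ n)‖ := fun n => lt_of_lt_of_le hε (hφε n)
  refine ⟨fun n => ⟨((‖g (φ n)‖ : ℂ))⁻¹ • g (φ n),
    A.domain.smul_mem _ (hg _)⟩, fun n => ?_, ?_⟩
  · simp only [norm_smul, norm_inv, Complex.norm_real, Real.norm_eq_abs,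
      abs_of_nonneg (norm_nonneg _)]
    rw [inv_mul_eq_div, div_self (hpos n).ne']
  · have heq : ∀ n, F (((‖g (φ n)‖ : ℂ))⁻¹ • g (φ n))
        = ((‖g (φ n)‖ : ℂ))⁻¹ • F (g (φ n)) := fun n => hF _ _ (hg _)
    simp only [heq]
    rw [tendsto_zero_iff_norm_tendsto_zero]
    have hb : ∀ n, ‖((‖g (φ n)‖ : ℂ))⁻¹ • F (g (φ n))‖ ≤ ε⁻¹ * ‖F (g (φ n))‖ := by
      intro n
      rw [norm_smul, norm_inv, Complex.norm_real, Real.norm_eq_abs,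
        abs_of_nonneg (norm_nonneg _)]
      gcongr
      exact hφε n
    have h0 : Tendsto (fun n => ε⁻¹ * ‖F (g (φ n))‖) atTop (𝓝 (0 : ℝ)) := by
      have := (tendsto_zero_iff_norm_tendsto_zero.mp
        (hten.comp hφ.tendsto_atTop)).const_mul ε⁻¹
      simpa using this
    exact squeeze_zero (fun n => norm_nonneg _) hb h0

/-- If the pencil `λE - A` has a right approximate polynomial sequence, then every
`λ0 ∈ ℂ` is an approximate singularity, and additionally `∞` is an approximate
singularity: there are unit vectors `yₙ ∈ D(A)` with `E yₙ → 0`. -/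
theorem stmt_9 (E : X →L[ℂ] Y) (A : X →ₗ.[ℂ] Y)
    (hdense : Dense (A.domain : Set X)) (hclosed : IsClosed (A.graph : Set (X × Y)))
    (h : ∃ (k : ℕ → ℕ) (a : ℕ → ℕ → X), IsRAPS E A k a) :
    (∀ lam0 : ℂ, IsApproxSingularity E A lam0) ∧
    (∃ y : ℕ → A.domain, (∀ n, ‖(y n : X)‖ = 1) ∧
      Tendsto (fun n => E ((y n : X))) atTop (𝓝 (0 : Y))) := by
  obtain ⟨k, a, hdom, h2⟩ := h
  constructor
  · intro lam
    obtain ⟨hp0, hr0, hpnt, hrnt, hpt, hrt⟩ := h2 lam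
    obtain ⟨x, hx1, hx2⟩ := key_normalize A (fun v => lam • E v - pap A v)
      (fun c v hv => by
        simp only [map_smul, pap_smul' A c v hv, smul_comm lam c, smul_sub])
      (fun n => polyEval (a n) (k n) lam) (fun n => (hdom n lam).1) hpnt hpt
    refine ⟨x, hx1, ?_⟩
    have : ∀ n, A (x n) = pap A ((x n : X)) := fun n =>
      (pap_mem' A ((x n : X)) (x n).2).symm
    simpa only [this] using hx2
  · obtain ⟨hp0, hr0, hpnt, hrnt, hpt, hrt⟩ := h2 0
    have hE : Tendsto (fun n => E (revEval (a n) (k n) 0)) atTop (𝓝 (0 : Y)) := by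
      have := hrt.neg
      simpa using this
    exact key_normalize A (fun v => E v) (fun c v _ => E.map_smul c v)
      (fun n => revEval (a n) (k n) 0) (fun n => (hdom n 0).2) hrnt hE
end
end
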